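/- Monotonicity of the rangefinder error: if B, C ∈ ℝ^{m×n} satisfy BᵀB ⪯ CᵀC in the semidefinite order, then for every fixed test matrix X ∈ ℝ^{n×ℓ}, the Schur complement satisfies (BᵀB)/X ⪯ (CᵀC)/X; i.e., the squared rangefinder error increases in the semidefinite order. -/

import Mathlib

open Matrix

/-- The Moore–Penrose pseudoinverse of a real matrix: the (unique) matrix satisfying
the four Penrose conditions. -/
noncomputable def pinv {m n : ℕ} (A : Matrix (Fin m) (Fin n) ℝ) :
    Matrix (Fin n) (Fin m) ℝ :=
  letI := Classical.propDecidable
  if h : ∃ B : Matrix (Fin n) (Fin m) ℝ,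
      (A * B)ᵀ = A * B ∧ (B * A)ᵀ = B * A ∧ A * B * A = A ∧ B * A * B = B
  then h.choose else 0

def Penrose {p q : ℕ} (A : Matrix (Fin p) (Fin q) ℝ) (B : Matrix (Fin q) (Fin p) ℝ) : Prop :=
  (A * B)ᵀ = A * B ∧ (B * A)ᵀ = B * A ∧ A * B * A = A ∧ B * A * B = B

lemma penrose_of_diag {k : ℕ} (U : Matrix (Fin k) (Fin k) ℝ) (d : Fin k → ℝ)
    (hU2 : Uᵀ * U = 1) :
    ∃ B, Penrose (U * diagonal d * Uᵀ) B := by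
  have key : ∀ f g : Fin k → ℝ,
      (U * diagonal f * Uᵀ) * (U * diagonal g * Uᵀ)
        = U * diagonal (fun i => f i * g i) * Uᵀ := by
    intro f g
    have h1 : Uᵀ * (U * (diagonal g * Uᵀ)) = diagonal g * Uᵀ := by
      rw [← Matrix.mul_assoc, hU2, Matrix.one_mul]
    have h2 : diagonal f * (diagonal g * Uᵀ) = diagonal (fun i => f i * g i) * Uᵀ := by
      rw [← Matrix.mul_assoc, diagonal_mul_diagonal]
    simp only [Matrix.mul_assoc, h1, h2]
  have hsymm : ∀ f : Fin k → ℝ, (U * diagonal f * Uᵀ)ᵀ = U * diagonal f * Uᵀ := by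
    intro f
    simp [transpose_mul, diagonal_transpose, Matrix.mul_assoc]
  refine ⟨U * diagonal (fun i => (d i)⁻¹) * Uᵀ, ?_, ?_, ?_, ?_⟩
  · rw [key]; exact hsymm _
  · rw [key]; exact hsymm _
  · rw [key, key]
    have : (fun i => d i * (d i)⁻¹ * d i) = d := by
      funext i
      by_cases h : d i = 0
      · simp [h]
      · field_simp
    rw [this]
  · rw [key, key]
    have : (fun i => (d i)⁻¹ * d i * (d i)⁻¹) = fun i => (d i)⁻¹ := by
      funext i
      by_cases h : d i = 0
      · simp [h]
      · field_simp
    rw [this]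

lemma exists_penrose {k : ℕ} {A : Matrix (Fin k) (Fin k) ℝ} (hA : A.IsHermitian) :
    ∃ B : Matrix (Fin k) (Fin k) ℝ, Penrose A B := by
  have h2 : star (hA.eigenvectorUnitary : Matrix (Fin k) (Fin k) ℝ) *
      (hA.eigenvectorUnitary : Matrix (Fin k) (Fin k) ℝ) = 1 :=
    (Matrix.mem_unitaryGroup_iff').mp (hA.eigenvectorUnitary).2
  rw [star_eq_conjTranspose, conjTranspose_eq_transpose_of_trivial] at h2
  have hsp := hA.spectral_theorem
  rw [Unitary.conjStarAlgAut_apply, star_eq_conjTranspose,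
    conjTranspose_eq_transpose_of_trivial] at hsp
  rw [hsp]
  exact penrose_of_diag _ _ h2

lemma penrose_unique {p q : ℕ} {A : Matrix (Fin p) (Fin q) ℝ}
    {B₁ B₂ : Matrix (Fin q) (Fin p) ℝ} (h1 : Penrose A B₁) (h2 : Penrose A B₂) : B₁ = B₂ := by
  obtain ⟨s1, t1, a1, b1⟩ := h1
  obtain ⟨s2, t2, a2, b2⟩ := h2
  have hAB : A * B₁ = A * B₂ := by
    calc A * B₁ = (A * B₁)ᵀ := s1.symm
      _ = ((A * B₂ * A) * B₁)ᵀ := by rw [a2]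
      _ = ((A * B₂) * (A * B₁))ᵀ := by rw [Matrix.mul_assoc (A * B₂) A B₁]
      _ = (A * B₁)ᵀ * (A * B₂)ᵀ := transpose_mul _ _
      _ = (A * B₁) * (A * B₂) := by rw [s1, s2]
      _ = (A * B₁ * A) * B₂ := (Matrix.mul_assoc _ _ _).symm
      _ = A * B₂ := by rw [a1]
  have hBA : B₁ * A = B₂ * A := by
    calc B₁ * A = B₁ * (A * B₂ * A) := by rw [a2]
      _ = (B₁ * A) * (B₂ * A) := by simp only [Matrix.mul_assoc]
      _ = (B₁ * A)ᵀ * (B₂ * A)ᵀ := by rw [t1, t2]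
      _ = ((B₂ * A) * (B₁ * A))ᵀ := (transpose_mul _ _).symm
      _ = (B₂ * (A * B₁ * A))ᵀ := by simp only [Matrix.mul_assoc]
      _ = (B₂ * A)ᵀ := by rw [a1]
      _ = B₂ * A := t2
  calc B₁ = B₁ * A * B₁ := b1.symm
    _ = B₁ * (A * B₂) := by rw [Matrix.mul_assoc, hAB]
    _ = (B₂ * A) * B₂ := by rw [← Matrix.mul_assoc, hBA]
    _ = B₂ := b2

lemma pinv_penrose {p q : ℕ} {A : Matrix (Fin p) (Fin q) ℝ}
    (h : ∃ B, Penrose A B) : Penrose A (pinv A) := by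
  have e : pinv A = h.choose := by unfold pinv; exact dif_pos h
  rw [e]; exact h.choose_spec

lemma pinv_transpose {k : ℕ} {A : Matrix (Fin k) (Fin k) ℝ} (hs : Aᵀ = A)
    (h : ∃ B, Penrose A B) : (pinv A)ᵀ = pinv A := by
  obtain ⟨s1, t1, a1, b1⟩ := pinv_penrose h
  have e1 : A * (pinv A)ᵀ = pinv A * A := by
    have h0 : Aᵀ * (pinv A)ᵀ = pinv A * A := by rw [← transpose_mul]; exact t1
    rwa [hs] at h0
  have e2 : (pinv A)ᵀ * A = A * pinv A := by
    have h0 : (pinv A)ᵀ * Aᵀ = A * pinv A := by rw [← transpose_mul]; exact s1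
    rwa [hs] at h0
  have h3 : (A * (pinv A)ᵀ * A)ᵀ = A := by
    simp only [transpose_mul, transpose_transpose]
    rw [hs, ← Matrix.mul_assoc, a1]
  have h4 : ((pinv A)ᵀ * A * (pinv A)ᵀ)ᵀ = pinv A := by
    simp only [transpose_mul, transpose_transpose]
    rw [hs, ← Matrix.mul_assoc, b1]
  have hpT : Penrose A (pinv A)ᵀ := by
    refine ⟨?_, ?_, ?_, ?_⟩
    · rw [e1]; exact t1
    · rw [e2]; exact s1
    · calc A * (pinv A)ᵀ * A = (A * (pinv A)ᵀ * A)ᵀᵀ := (transpose_transpose _).symm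
        _ = Aᵀ := by rw [h3]
        _ = A := hs
    · calc (pinv A)ᵀ * A * (pinv A)ᵀ = ((pinv A)ᵀ * A * (pinv A)ᵀ)ᵀᵀ := (transpose_transpose _).symm
        _ = (pinv A)ᵀ := by rw [h4]
  exact penrose_unique hpT (pinv_penrose h)

lemma pinv_mul_key {m l : ℕ} (N : Matrix (Fin m) (Fin l) ℝ) :
    N * (pinv (Nᵀ * N) * (Nᵀ * N)) = N ∧ (Nᵀ * N) * (pinv (Nᵀ * N) * Nᵀ) = Nᵀ ∧
      (pinv (Nᵀ * N))ᵀ = pinv (Nᵀ * N) := by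
  have hherm : (Nᵀ * N).IsHermitian := by
    have h0 := isHermitian_conjTranspose_mul_self N
    rwa [conjTranspose_eq_transpose_of_trivial] at h0
  have hGs : (Nᵀ * N)ᵀ = Nᵀ * N := by rw [transpose_mul, transpose_transpose]
  have hex := exists_penrose hherm
  obtain ⟨s1, t1, a1, b1⟩ := pinv_penrose hex
  have hQs := pinv_transpose hGs hex
  have KB := a1
  simp only [Matrix.mul_assoc] at KB
  have hzero : (N * (pinv (Nᵀ * N) * (Nᵀ * N)) - N)ᵀ * (N * (pinv (Nᵀ * N) * (Nᵀ * N)) - N)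
      = 0 := by
    have hT : (N * (pinv (Nᵀ * N) * (Nᵀ * N)) - N)ᵀ
        = (pinv (Nᵀ * N) * (Nᵀ * N)) * Nᵀ - Nᵀ := by
      rw [transpose_sub, transpose_mul, t1]
    rw [hT]
    simp only [Matrix.sub_mul, Matrix.mul_sub, Matrix.mul_assoc, KB]
    simp
  have key1 : N * (pinv (Nᵀ * N) * (Nᵀ * N)) = N := by
    have hz : N * (pinv (Nᵀ * N) * (Nᵀ * N)) - N = 0 := by
      refine conjTranspose_mul_self_eq_zero.mp ?_
      rw [conjTranspose_eq_transpose_of_trivial]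
      exact hzero
    exact sub_eq_zero.mp hz
  refine ⟨key1, ?_, hQs⟩
  have h0 := congrArg Matrix.transpose key1
  rw [transpose_mul, transpose_mul, hQs, hGs] at h0
  rw [Matrix.mul_assoc] at h0
  exact h0


/-- The generalized Schur complement `A/X = A − (AX)(XᵀAX)†(AX)ᵀ` of a PSD matrix `A`
with respect to the range of `X`. -/
noncomputable def schurComp {n ℓ : ℕ} (A : Matrix (Fin n) (Fin n) ℝ)
    (X : Matrix (Fin n) (Fin ℓ) ℝ) : Matrix (Fin n) (Fin n) ℝ :=
  A - (A * X) * pinv (Xᵀ * A * X) * (A * X)ᵀ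

/-- **Monotonicity of the rangefinder error.**
If `BᵀB ⪯ CᵀC` in the semidefinite order, then for every test matrix `X`,
`(BᵀB)/X ⪯ (CᵀC)/X`. -/
theorem schur_complement_monotone
    {m₁ m₂ n ℓ : ℕ} (B : Matrix (Fin m₁) (Fin n) ℝ) (C : Matrix (Fin m₂) (Fin n) ℝ)
    (h : (Cᵀ * C - Bᵀ * B).PosSemidef) (X : Matrix (Fin n) (Fin ℓ) ℝ) :
    (schurComp (Cᵀ * C) X - schurComp (Bᵀ * B) X).PosSemidef := by
  have hargB : Xᵀ * (Bᵀ * B) * X = (B * X)ᵀ * (B * X) := by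
    rw [transpose_mul]; simp only [Matrix.mul_assoc]
  have hargC : Xᵀ * (Cᵀ * C) * X = (C * X)ᵀ * (C * X) := by
    rw [transpose_mul]; simp only [Matrix.mul_assoc]
  have kB := pinv_mul_key (B * X)
  have kC := pinv_mul_key (C * X)
  rw [← hargB] at kB
  rw [← hargC] at kC
  set q := pinv (Xᵀ * (Bᵀ * B) * X) with hqdef
  set q' := pinv (Xᵀ * (Cᵀ * C) * X) with hq'def
  obtain ⟨kB1, kB2, hq⟩ := kB
  obtain ⟨kC1, kC2, hq'⟩ := kC
  have R1 : ∀ (p : ℕ) (T : Matrix (Fin m₁) (Fin p) ℝ),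
      Xᵀ * (Bᵀ * (B * (X * (q * (Xᵀ * (Bᵀ * T)))))) = Xᵀ * (Bᵀ * T) := by
    intro p T
    have h0 : ((Xᵀ * (Bᵀ * B) * X) * (q * (B * X)ᵀ)) * T = (B * X)ᵀ * T := by rw [kB2]
    simp only [transpose_mul, Matrix.mul_assoc] at h0
    exact h0
  have R3 : ∀ (p : ℕ) (T : Matrix (Fin ℓ) (Fin p) ℝ),
      B * (X * (q * (Xᵀ * (Bᵀ * (B * (X * T)))))) = B * (X * T) := by
    intro p T
    have h0 : ((B * X) * (q * (Xᵀ * (Bᵀ * B) * X))) * T = (B * X) * T := by rw [kB1]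
    simp only [transpose_mul, Matrix.mul_assoc] at h0
    exact h0
  have R1' : ∀ (p : ℕ) (T : Matrix (Fin m₂) (Fin p) ℝ),
      Xᵀ * (Cᵀ * (C * (X * (q' * (Xᵀ * (Cᵀ * T)))))) = Xᵀ * (Cᵀ * T) := by
    intro p T
    have h0 : ((Xᵀ * (Cᵀ * C) * X) * (q' * (C * X)ᵀ)) * T = (C * X)ᵀ * T := by rw [kC2]
    simp only [transpose_mul, Matrix.mul_assoc] at h0
    exact h0
  have R3' : ∀ (p : ℕ) (T : Matrix (Fin ℓ) (Fin p) ℝ),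
      C * (X * (q' * (Xᵀ * (Cᵀ * (C * (X * T)))))) = C * (X * T) := by
    intro p T
    have h0 : ((C * X) * (q' * (Xᵀ * (Cᵀ * C) * X))) * T = (C * X) * T := by rw [kC1]
    simp only [transpose_mul, Matrix.mul_assoc] at h0
    exact h0
  have key : schurComp (Cᵀ * C) X - schurComp (Bᵀ * B) X
      = (1 - X * (q' * (Xᵀ * (Cᵀ * C))))ᵀ * (Cᵀ * C - Bᵀ * B)
          * (1 - X * (q' * (Xᵀ * (Cᵀ * C))))
        + (q' * (Xᵀ * (Cᵀ * C)) - q * (Xᵀ * (Bᵀ * B)))ᵀ * (Xᵀ * (Bᵀ * B) * X)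
          * (q' * (Xᵀ * (Cᵀ * C)) - q * (Xᵀ * (Bᵀ * B))) := by
    simp only [schurComp, ← hqdef, ← hq'def]
    simp only [transpose_sub, transpose_mul, transpose_one, transpose_transpose, hq, hq']
    simp only [Matrix.sub_mul, Matrix.mul_sub, Matrix.mul_one, Matrix.one_mul,
      Matrix.mul_assoc, R1, R3, R1', R3']
    abel
  rw [key]
  apply PosSemidef.add
  · have h1 := h.conjTranspose_mul_mul_same (1 - X * (q' * (Xᵀ * (Cᵀ * C))))
    rwa [conjTranspose_eq_transpose_of_trivial] at h1
  · have h2 : (Xᵀ * (Bᵀ * B) * X).PosSemidef := by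
      rw [hargB]
      have h3 := posSemidef_conjTranspose_mul_self (B * X)
      rwa [conjTranspose_eq_transpose_of_trivial] at h3
    have h4 := h2.conjTranspose_mul_mul_same (q' * (Xᵀ * (Cᵀ * C)) - q * (Xᵀ * (Bᵀ * B)))
    rwa [conjTranspose_eq_transpose_of_trivial] at h4
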